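/- arXiv:1709.09022 — 11 statements merged into one kernel-verified Lean document; each statement's English description precedes it below -/
import Mathlib

section
/- Let A be an m×n real matrix, b ∈ ℝ^m, and x̄_j = min_i (b_i - a_{ij}); define M_j = {i : x̄_j = b_i - a_{ij}}. Then for x ∈ ℝ^n, max_j (a_{ij} + x_j) = b_i for all i if and only if x ≤ x̄ (componentwise) and ⋃_{j : x_j = x̄_j} M_j = {1,...,m}. -/
/-- Max-plus matrix-vector product: `(A ⊗ x)_i = max_j (a_{ij} + x_j)`. -/
noncomputable def mpMul {m n : ℕ} [NeZero n] (A : Fin m → Fin n → ℝ) (x : Fin n → ℝ)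
    (i : Fin m) : ℝ :=
  Finset.univ.sup' Finset.univ_nonempty (fun j => A i j + x j)

theorem mpMul_eq_iff {m n : ℕ} [NeZero m] [NeZero n]
    (A : Fin m → Fin n → ℝ) (b : Fin m → ℝ) (x : Fin n → ℝ) (xbar : Fin n → ℝ)
    (hxbar : ∀ j, xbar j = Finset.univ.inf' Finset.univ_nonempty (fun i => b i - A i j))
    (M : Fin n → Set (Fin m)) (hM : ∀ j, M j = {i | xbar j = b i - A i j}) :
    (∀ i, mpMul A x i = b i) ↔
      ((∀ j, x j ≤ xbar j) ∧ (⋃ j ∈ {j : Fin n | x j = xbar j}, M j) = Set.univ) := by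
  have hbar_le : ∀ j i, xbar j ≤ b i - A i j := by
    intro j i
    rw [hxbar j]
    exact Finset.inf'_le _ (Finset.mem_univ i)
  constructor
  · intro h
    have hle : ∀ i j, A i j + x j ≤ b i := by
      intro i j
      rw [← h i]
      exact Finset.le_sup' (fun j => A i j + x j) (Finset.mem_univ j)
    have hx : ∀ j, x j ≤ xbar j := by
      intro j
      rw [hxbar j]
      apply Finset.le_inf'
      intro i _
      linarith [hle i j]
    refine ⟨hx, ?_⟩
    ext i
    simp only [Set.mem_iUnion, Set.mem_univ, iff_true, Set.mem_setOf_eq]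
    obtain ⟨j, -, hj⟩ := Finset.exists_mem_eq_sup' (Finset.univ_nonempty (α := Fin n))
      (fun j => A i j + x j)
    have hji : A i j + x j = b i := by
      rw [← h i]; unfold mpMul; rw [hj]
    have h1 : x j = xbar j := le_antisymm (hx j) (by linarith [hbar_le j i])
    refine ⟨j, h1, ?_⟩
    rw [hM j]
    simp only [Set.mem_setOf_eq]
    linarith
  · rintro ⟨hx, hcov⟩ i
    have hmem : i ∈ (⋃ j ∈ {j : Fin n | x j = xbar j}, M j) := hcov ▸ Set.mem_univ i
    simp only [Set.mem_iUnion, Set.mem_setOf_eq] at hmem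
    obtain ⟨j, hj1, hj2⟩ := hmem
    rw [hM j] at hj2
    simp only [Set.mem_setOf_eq] at hj2
    apply le_antisymm
    · apply Finset.sup'_le
      intro k _
      linarith [hx k, hbar_le k i]
    · have : A i j + x j = b i := by rw [hj1, hj2]; ring
      rw [← this]
      exact Finset.le_sup' (fun j => A i j + x j) (Finset.mem_univ j)
end

section
/- Let A be an m×n real matrix, b ∈ ℝ^m, and x̄_j = min_i (b_i - a_{ij}). The system Ax = b (with Ax defined by (Ax)_i = max_j (a_{ij} + x_j)) has a solution x ∈ ℝ^n if and only if A x̄ = b. -/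
theorem mpMul_solvable_iff {m n : ℕ} [NeZero m] [NeZero n]
    (A : Fin m → Fin n → ℝ) (b : Fin m → ℝ) (xbar : Fin n → ℝ)
    (hxbar : ∀ j, xbar j = Finset.univ.inf' Finset.univ_nonempty (fun i => b i - A i j)) :
    (∃ x : Fin n → ℝ, ∀ i, mpMul A x i = b i) ↔ (∀ i, mpMul A xbar i = b i) := by
  constructor
  · rintro ⟨x, hx⟩ i
    have hxle : ∀ j, x j ≤ xbar j := by
      intro j
      rw [hxbar j]
      apply Finset.le_inf'
      intro i' _
      have h1 : A i' j + x j ≤ mpMul A x i' :=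
        Finset.le_sup' (fun j => A i' j + x j) (Finset.mem_univ j)
      rw [hx i'] at h1
      linarith
    have hub : mpMul A xbar i ≤ b i := by
      apply Finset.sup'_le
      intro j _
      have : xbar j ≤ b i - A i j := by
        rw [hxbar j]
        exact Finset.inf'_le _ (Finset.mem_univ i)
      linarith
    have hlb : b i ≤ mpMul A xbar i := by
      rw [← hx i]
      apply Finset.sup'_le
      intro j _
      calc A i j + x j ≤ A i j + xbar j := by linarith [hxle j]
        _ ≤ mpMul A xbar i := Finset.le_sup' (fun j => A i j + xbar j) (Finset.mem_univ j)
    linarith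
  · intro h
    exact ⟨xbar, h⟩
end

section
/- Let A be an m×n real matrix, b ∈ ℝ^m, d ∈ ℝ^n, and x̄_j = min_i (b_i - a_{ij}). There exists x ∈ ℝ^n with Ax = b and x ≤ d if and only if A z = b, where z_j = min(d_j, x̄_j). -/
theorem mpMul_solvable_below_iff {m n : ℕ} [NeZero m] [NeZero n]
    (A : Fin m → Fin n → ℝ) (b : Fin m → ℝ) (d : Fin n → ℝ) (xbar : Fin n → ℝ)
    (hxbar : ∀ j, xbar j = Finset.univ.inf' Finset.univ_nonempty (fun i => b i - A i j))
    (z : Fin n → ℝ) (hz : ∀ j, z j = min (d j) (xbar j)) :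
    (∃ x : Fin n → ℝ, (∀ i, mpMul A x i = b i) ∧ ∀ j, x j ≤ d j) ↔
      (∀ i, mpMul A z i = b i) := by
  constructor
  · rintro ⟨x, hx, hxd⟩ i
    have hxz : ∀ j, x j ≤ z j := by
      intro j
      rw [hz]
      refine le_min (hxd j) ?_
      rw [hxbar]
      refine Finset.le_inf' _ _ fun i' _ => ?_
      have : A i' j + x j ≤ b i' := by
        rw [← hx i', mpMul]
        exact Finset.le_sup' (fun j => A i' j + x j) (Finset.mem_univ j)
      linarith
    have hzle : mpMul A z i ≤ b i := by
      rw [mpMul]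
      refine Finset.sup'_le _ _ fun j _ => ?_
      have : z j ≤ xbar j := by rw [hz]; exact min_le_right _ _
      rw [hxbar] at this
      have := this.trans (Finset.inf'_le _ (Finset.mem_univ i))
      linarith
    have hge : b i ≤ mpMul A z i := by
      rw [← hx i, mpMul, mpMul]
      exact Finset.sup'_le _ _ fun j _ =>
        le_trans (by linarith [hxz j] : A i j + x j ≤ A i j + z j)
          (Finset.le_sup' (fun j => A i j + z j) (Finset.mem_univ j))
    linarith
  · intro h
    exact ⟨z, h, fun j => by rw [hz]; exact min_le_left _ _⟩
end

section
/- For any m×n real matrix A and b ∈ ℝ^m, the solution set S = {x ∈ ℝ^n : Ax = b} is max-convex: if x, y ∈ S and λ, μ ∈ ℝ with max(λ, μ) = 0, then the vector with components max(λ + x_j, μ + y_j) lies in S. -/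
theorem mpMul_solutionSet_maxConvex {m n : ℕ} [NeZero n]
    (A : Fin m → Fin n → ℝ) (b : Fin m → ℝ)
    (x y : Fin n → ℝ) (hx : ∀ i, mpMul A x i = b i) (hy : ∀ i, mpMul A y i = b i)
    (lam mu : ℝ) (hlm : max lam mu = 0) :
    ∀ i, mpMul A (fun j => max (lam + x j) (mu + y j)) i = b i := by
  intro i
  have key : mpMul A (fun j => max (lam + x j) (mu + y j)) i =
      max (lam + mpMul A x i) (mu + mpMul A y i) := by
    unfold mpMul
    apply le_antisymm
    · apply Finset.sup'_le
      intro j _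
      simp only
      rcases le_total (lam + x j) (mu + y j) with h | h
      · have := Finset.le_sup' (fun j => A i j + y j) (Finset.mem_univ j)
        have h2 : A i j + max (lam + x j) (mu + y j) = A i j + (mu + y j) := by
          rw [max_eq_right h]
        rw [h2]
        refine le_max_of_le_right ?_
        linarith
      · have := Finset.le_sup' (fun j => A i j + x j) (Finset.mem_univ j)
        have h2 : A i j + max (lam + x j) (mu + y j) = A i j + (lam + x j) := by
          rw [max_eq_left h]
        rw [h2]
        refine le_max_of_le_left ?_
        linarith
    · apply max_le
      · rw [add_comm, Finset.sup'_add]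
        apply Finset.sup'_le
        intro j _
        have := Finset.le_sup' (fun j => A i j + max (lam + x j) (mu + y j))
          (Finset.mem_univ j)
        have h2 : lam + x j ≤ max (lam + x j) (mu + y j) := le_max_left _ _
        simp only at this ⊢
        linarith
      · rw [add_comm, Finset.sup'_add]
        apply Finset.sup'_le
        intro j _
        have := Finset.le_sup' (fun j => A i j + max (lam + x j) (mu + y j))
          (Finset.mem_univ j)
        have h2 : mu + y j ≤ max (lam + x j) (mu + y j) := le_max_right _ _
        simp only at this ⊢
        linarith
  rw [key, hx, hy]
  rw [max_add_add_right, hlm, zero_add]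
end

section
/- For any m×n real matrix A, b ∈ ℝ^m, and d ∈ ℝ^n, the set S' = {x ∈ ℝ^n : Ax = b, x ≤ d} is max-convex. -/
private lemma sup'_max {n : ℕ} [NeZero n] (f g : Fin n → ℝ) :
    Finset.univ.sup' Finset.univ_nonempty (fun j => max (f j) (g j)) =
      max (Finset.univ.sup' Finset.univ_nonempty f)
          (Finset.univ.sup' Finset.univ_nonempty g) := by
  apply le_antisymm
  · rw [Finset.sup'_le_iff]
    intro j _
    exact max_le_max (Finset.le_sup' f (Finset.mem_univ j))
      (Finset.le_sup' g (Finset.mem_univ j))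
  · apply max_le <;> rw [Finset.sup'_le_iff] <;> intro j _
    · exact (le_max_left (f j) (g j)).trans
        (Finset.le_sup' (fun j => max (f j) (g j)) (Finset.mem_univ j))
    · exact (le_max_right (f j) (g j)).trans
        (Finset.le_sup' (fun j => max (f j) (g j)) (Finset.mem_univ j))

private lemma sup'_add_const {n : ℕ} [NeZero n] (c : ℝ) (f : Fin n → ℝ) :
    Finset.univ.sup' Finset.univ_nonempty (fun j => c + f j) =
      c + Finset.univ.sup' Finset.univ_nonempty f := by
  apply le_antisymm
  · rw [Finset.sup'_le_iff]
    intro j _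
    exact (add_le_add_iff_left c).mpr (Finset.le_sup' f (Finset.mem_univ j))
  · rw [add_comm, ← le_sub_iff_add_le, Finset.sup'_le_iff]
    intro j _
    rw [le_sub_iff_add_le, add_comm]
    exact Finset.le_sup' (fun j => c + f j) (Finset.mem_univ j)

theorem mpMul_boundedSolutionSet_maxConvex {m n : ℕ} [NeZero n]
    (A : Fin m → Fin n → ℝ) (b : Fin m → ℝ) (d : Fin n → ℝ)
    (x y : Fin n → ℝ)
    (hx : (∀ i, mpMul A x i = b i) ∧ ∀ j, x j ≤ d j)
    (hy : (∀ i, mpMul A y i = b i) ∧ ∀ j, y j ≤ d j)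
    (lam mu : ℝ) (hlm : max lam mu = 0) :
    (∀ i, mpMul A (fun j => max (lam + x j) (mu + y j)) i = b i) ∧
      ∀ j, max (lam + x j) (mu + y j) ≤ d j := by
  have hl : lam ≤ 0 := hlm ▸ le_max_left _ _
  have hm : mu ≤ 0 := hlm ▸ le_max_right _ _
  constructor
  · intro i
    have : mpMul A (fun j => max (lam + x j) (mu + y j)) i =
        max (lam + mpMul A x i) (mu + mpMul A y i) := by
      unfold mpMul
      rw [← sup'_add_const lam, ← sup'_add_const mu, ← sup'_max]
      refine Finset.sup'_congr _ rfl ?_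
      intro j _
      rw [max_comm (lam + (A i j + x j))]
      simp only [← max_add_add_left]
      rw [max_comm]
      ring_nf
    rw [this, hx.1 i, hy.1 i, max_add_add_right, hlm, zero_add]
  · intro j
    apply max_le
    · calc lam + x j ≤ 0 + x j := by linarith
        _ ≤ d j := by simpa using hx.2 j
    · calc mu + y j ≤ 0 + y j := by linarith
        _ ≤ d j := by simpa using hy.2 j
end

section
/- Let S ⊆ ℝ^n be max-convex and f(x) = max_j (c_j + x_j) for fixed c ∈ ℝ^n. If x, y ∈ S with f(x) ≤ f(y), then for every value v ∈ [f(x), f(y)] there exists z ∈ S with f(z) = v. -/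
/-- A set `S ⊆ ℝⁿ` is max-convex if `λ⊗x ⊕ μ⊗y ∈ S` whenever `x, y ∈ S` and `max(λ,μ) = 0`. -/
def MaxConvex {n : ℕ} (S : Set (Fin n → ℝ)) : Prop :=
  ∀ x ∈ S, ∀ y ∈ S, ∀ lam mu : ℝ, max lam mu = 0 →
    (fun j => max (lam + x j) (mu + y j)) ∈ S

theorem maxConvex_intermediate_value {n : ℕ} [NeZero n]
    (S : Set (Fin n → ℝ)) (hS : MaxConvex S) (c : Fin n → ℝ)
    (f : (Fin n → ℝ) → ℝ)
    (hf : ∀ x, f x = Finset.univ.sup' Finset.univ_nonempty (fun j => c j + x j))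
    (x y : Fin n → ℝ) (hx : x ∈ S) (hy : y ∈ S) (hxy : f x ≤ f y) :
    ∀ v ∈ Set.Icc (f x) (f y), ∃ z ∈ S, f z = v := by
  rintro v ⟨hv1, hv2⟩
  set mu := v - f y with hmu
  have hmu0 : mu ≤ 0 := by simp [hmu]; linarith
  have hmax : max (0 : ℝ) mu = 0 := max_eq_left hmu0
  refine ⟨fun j => max (0 + x j) (mu + y j), hS x hx y hy 0 mu hmax, ?_⟩
  have hsupmax : ∀ A B : Fin n → ℝ,
      Finset.univ.sup' Finset.univ_nonempty (fun j => max (A j) (B j))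
        = max (Finset.univ.sup' Finset.univ_nonempty A)
            (Finset.univ.sup' Finset.univ_nonempty B) := by
    intro A B
    apply le_antisymm
    · exact Finset.sup'_le _ _ fun j _ =>
        max_le_max (Finset.le_sup' A (Finset.mem_univ j)) (Finset.le_sup' B (Finset.mem_univ j))
    · exact max_le
        (Finset.sup'_le _ _ fun j _ =>
          le_trans (le_max_left _ _) (Finset.le_sup' (fun j => max (A j) (B j)) (Finset.mem_univ j)))
        (Finset.sup'_le _ _ fun j _ =>
          le_trans (le_max_right _ _) (Finset.le_sup' (fun j => max (A j) (B j)) (Finset.mem_univ j)))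
  have hsupadd : ∀ (t : ℝ) (A : Fin n → ℝ),
      Finset.univ.sup' Finset.univ_nonempty (fun j => t + A j)
        = t + Finset.univ.sup' Finset.univ_nonempty A := by
    intro t A
    apply le_antisymm
    · exact Finset.sup'_le _ _ fun j _ =>
        add_le_add_right (Finset.le_sup' A (Finset.mem_univ j)) t
    · obtain ⟨j, _, hj⟩ := Finset.exists_mem_eq_sup' Finset.univ_nonempty A
      rw [hj]
      exact Finset.le_sup' (fun j => t + A j) (Finset.mem_univ j)
  have : f (fun j => max (0 + x j) (mu + y j))
      = max (f x) (mu + f y) := by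
    rw [hf, hf x, hf y, ← hsupadd mu, ← hsupmax]
    apply Finset.sup'_congr _ rfl
    intro j _
    rw [zero_add, ← max_add_add_left]
    congr 1 <;> ring
  rw [this, hmu]
  have : v - f y + f y = v := by ring
  rw [this]
  exact max_eq_right hv1
end

section
/- Let a, c ∈ ℝ^n, b ∈ ℝ, f(x) = max_j (c_j + x_j), and S = {x ∈ ℝ^n : max_j (a_j + x_j) = b}. Then the image set F = {f(x) : x ∈ S} is a nonempty closed interval; in particular F attains both its maximum (at x̄ with x̄_j = b - a_j) and its minimum. -/
theorem maxLinear_image_of_hyperplane_is_Icc {n : ℕ} [NeZero n]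
    (a c : Fin n → ℝ) (b : ℝ)
    (f : (Fin n → ℝ) → ℝ)
    (hf : ∀ x, f x = Finset.univ.sup' Finset.univ_nonempty (fun j => c j + x j))
    (S : Set (Fin n → ℝ))
    (hS : S = {x | Finset.univ.sup' Finset.univ_nonempty (fun j => a j + x j) = b})
    (xbar : Fin n → ℝ) (hxbar : ∀ j, xbar j = b - a j) :
    ∃ p q : ℝ, p ≤ q ∧ {v | ∃ x ∈ S, f x = v} = Set.Icc p q ∧
      xbar ∈ S ∧ f xbar = q ∧ ∃ x ∈ S, f x = p := by
  have hne : (Finset.univ : Finset (Fin n)).Nonempty := Finset.univ_nonempty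
  set g : Fin n → ℝ := fun j => c j + (b - a j) with hg
  set p : ℝ := Finset.univ.inf' hne g with hp
  set q : ℝ := Finset.univ.sup' hne g with hq
  have hpq : p ≤ q := by
    obtain ⟨j, _⟩ := hne
    exact le_trans (Finset.inf'_le _ (Finset.mem_univ j))
      (Finset.le_sup' _ (Finset.mem_univ j))
  -- membership construction for any v ∈ [p,q]
  have hmem : ∀ v, p ≤ v → v ≤ q → ∃ x ∈ S, f x = v := by
    intro v hpv hvq
    refine ⟨fun j => min (b - a j) (v - c j), ?_, ?_⟩
    · rw [hS]
      show Finset.univ.sup' _ (fun j => a j + min (b - a j) (v - c j)) = b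
      apply le_antisymm
      · apply Finset.sup'_le
        intro j _
        have : min (b - a j) (v - c j) ≤ b - a j := min_le_left _ _
        linarith
      · obtain ⟨k, _, hk⟩ := Finset.exists_mem_eq_inf' hne g
        have hgk : g k ≤ v := by rw [← hk]; exact hpv
        have hmin : min (b - a k) (v - c k) = b - a k := by
          apply min_eq_left; simp only [hg] at hgk; linarith
        have : a k + min (b - a k) (v - c k) = b := by rw [hmin]; ring
        calc b = a k + min (b - a k) (v - c k) := this.symm
          _ ≤ _ := Finset.le_sup' (fun j => a j + min (b - a j) (v - c j)) (Finset.mem_univ k)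
    · rw [hf]
      apply le_antisymm
      · apply Finset.sup'_le
        intro j _
        have : min (b - a j) (v - c j) ≤ v - c j := min_le_right _ _
        linarith
      · obtain ⟨k, _, hk⟩ := Finset.exists_mem_eq_sup' hne g
        have hgk : v ≤ g k := by rw [← hk]; exact hvq
        have hmin : min (b - a k) (v - c k) = v - c k := by
          apply min_eq_right; simp only [hg] at hgk; linarith
        have : c k + min (b - a k) (v - c k) = v := by rw [hmin]; ring
        calc v = c k + min (b - a k) (v - c k) := this.symm
          _ ≤ _ := Finset.le_sup' (fun j => c j + min (b - a j) (v - c j)) (Finset.mem_univ k)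
  have hxbarS : xbar ∈ S := by
    rw [hS]
    show Finset.univ.sup' _ (fun j => a j + xbar j) = b
    have : (fun j : Fin n => a j + xbar j) = fun _ => b := by
      funext j; rw [hxbar j]; ring
    rw [show Finset.univ.sup' hne (fun j : Fin n => a j + xbar j)
        = Finset.univ.sup' hne (fun _ => b) from by rw [this],
      Finset.sup'_const]
  have hfxbar : f xbar = q := by
    rw [hf, hq]
    apply Finset.sup'_congr _ rfl
    intro j _
    rw [hxbar j]
  have hset : {v | ∃ x ∈ S, f x = v} = Set.Icc p q := by
    ext v
    constructor
    · rintro ⟨x, hxS, hfx⟩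
      rw [hS] at hxS
      have hxS' : Finset.univ.sup' hne (fun j => a j + x j) = b := hxS
      constructor
      · obtain ⟨k, _, hk⟩ := Finset.exists_mem_eq_sup' hne (fun j => a j + x j)
        have hak : a k + x k = b := by rw [← hxS', hk]
        have : g k ≤ v := by
          rw [← hfx, hf]
          have : g k = c k + x k := by simp only [hg]; linarith
          rw [this]
          exact Finset.le_sup' (fun j => c j + x j) (Finset.mem_univ k)
        exact le_trans (Finset.inf'_le _ (Finset.mem_univ k)) this
      · rw [← hfx, hf]
        apply Finset.sup'_le
        intro j _
        have hle : a j + x j ≤ b := by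
          rw [← hxS']; exact Finset.le_sup' (fun j => a j + x j) (Finset.mem_univ j)
        have : c j + x j ≤ g j := by simp only [hg]; linarith
        exact le_trans this (Finset.le_sup' _ (Finset.mem_univ j))
    · rintro ⟨h1, h2⟩
      exact hmem v h1 h2
  exact ⟨p, q, hpq, hset, hxbarS, hfxbar, hmem p le_rfl hpq⟩
end

section
/- Let A be a 2×n real matrix. Then the image Im(A) = {Ax : x ∈ ℝ^n} equals {(y₁, y₂) ∈ ℝ² : α̲ ≤ y₂ - y₁ ≤ ᾱ}, where α̲ = min_j (a_{2j} - a_{1j}) and ᾱ = max_j (a_{2j} - a_{1j}). -/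
theorem image_of_two_row_matrix {n : ℕ} [NeZero n]
    (A : Fin 2 → Fin n → ℝ)
    (alow ahigh : ℝ)
    (hlow : alow = Finset.univ.inf' Finset.univ_nonempty (fun j => A 1 j - A 0 j))
    (hhigh : ahigh = Finset.univ.sup' Finset.univ_nonempty (fun j => A 1 j - A 0 j)) :
    {y : Fin 2 → ℝ | ∃ x : Fin n → ℝ, ∀ i, mpMul A x i = y i} =
      {y : Fin 2 → ℝ | alow ≤ y 1 - y 0 ∧ y 1 - y 0 ≤ ahigh} := by
  ext y
  simp only [Set.mem_setOf_eq]
  constructor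
  · rintro ⟨x, hx⟩
    have h0 := hx 0
    have h1 := hx 1
    obtain ⟨k, -, hk⟩ := Finset.exists_mem_eq_sup' (Finset.univ_nonempty)
      (fun j => A 1 j + x j)
    obtain ⟨l, -, hl⟩ := Finset.exists_mem_eq_sup' (Finset.univ_nonempty)
      (fun j => A 0 j + x j)
    have hy1k : y 1 = A 1 k + x k := by rw [← h1, mpMul, hk]
    have hy0l : y 0 = A 0 l + x l := by rw [← h0, mpMul, hl]
    have h0k : A 0 k + x k ≤ y 0 := by
      rw [← h0]; exact Finset.le_sup' (fun j => A 0 j + x j) (Finset.mem_univ k)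
    have h1l : A 1 l + x l ≤ y 1 := by
      rw [← h1]; exact Finset.le_sup' (fun j => A 1 j + x j) (Finset.mem_univ l)
    constructor
    · calc alow ≤ A 1 l - A 0 l := hlow ▸ Finset.inf'_le _ (Finset.mem_univ l)
        _ ≤ y 1 - y 0 := by rw [hy0l]; linarith
    · calc y 1 - y 0 ≤ A 1 k - A 0 k := by rw [hy1k]; linarith
        _ ≤ ahigh := by rw [hhigh]; exact Finset.le_sup' (fun j => A 1 j - A 0 j) (Finset.mem_univ k)
  · rintro ⟨hl, hh⟩
    refine ⟨fun j => min (y 0 - A 0 j) (y 1 - A 1 j), ?_⟩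
    obtain ⟨k, -, hk⟩ := Finset.exists_mem_eq_inf' (Finset.univ_nonempty)
      (fun j => A 1 j - A 0 j)
    obtain ⟨l, -, hl'⟩ := Finset.exists_mem_eq_sup' (Finset.univ_nonempty)
      (fun j => A 1 j - A 0 j)
    have hka : A 1 k - A 0 k ≤ y 1 - y 0 := le_trans (by rw [hlow, hk]) hl
    have hla : y 1 - y 0 ≤ A 1 l - A 0 l := le_trans hh (by rw [hhigh, hl'])
    intro i
    fin_cases i
    · show Finset.univ.sup' Finset.univ_nonempty (fun j => A 0 j + min (y 0 - A 0 j) (y 1 - A 1 j)) = y 0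
      apply le_antisymm
      · apply Finset.sup'_le
        intro j _
        have := min_le_left (y 0 - A 0 j) (y 1 - A 1 j)
        linarith
      · have hx : min (y 0 - A 0 k) (y 1 - A 1 k) = y 0 - A 0 k :=
          min_eq_left (by linarith)
        calc y 0 = A 0 k + min (y 0 - A 0 k) (y 1 - A 1 k) := by rw [hx]; ring
          _ ≤ _ := Finset.le_sup' (fun j => A 0 j + min (y 0 - A 0 j) (y 1 - A 1 j)) (Finset.mem_univ k)
    · show Finset.univ.sup' Finset.univ_nonempty (fun j => A 1 j + min (y 0 - A 0 j) (y 1 - A 1 j)) = y 1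
      apply le_antisymm
      · apply Finset.sup'_le
        intro j _
        have := min_le_right (y 0 - A 0 j) (y 1 - A 1 j)
        linarith
      · have hx : min (y 0 - A 0 l) (y 1 - A 1 l) = y 1 - A 1 l :=
          min_eq_right (by linarith)
        calc y 1 = A 1 l + min (y 0 - A 0 l) (y 1 - A 1 l) := by rw [hx]; ring
          _ ≤ _ := Finset.le_sup' (fun j => A 1 j + min (y 0 - A 0 j) (y 1 - A 1 j)) (Finset.mem_univ l)
end

section
/- Let A be a 2×n real matrix with α̲ = min_j (a_{2j} - a_{1j}) and ᾱ = max_j (a_{2j} - a_{1j}). Then there exists x ∈ ℝ^n with Ax ∈ ℤ² if and only if the interval [α̲, ᾱ] contains an integer. -/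
theorem integer_image_of_two_row_matrix_iff {n : ℕ} [NeZero n]
    (A : Fin 2 → Fin n → ℝ)
    (alow ahigh : ℝ)
    (hlow : alow = Finset.univ.inf' Finset.univ_nonempty (fun j => A 1 j - A 0 j))
    (hhigh : ahigh = Finset.univ.sup' Finset.univ_nonempty (fun j => A 1 j - A 0 j)) :
    (∃ x : Fin n → ℝ, ∀ i, ∃ k : ℤ, mpMul A x i = k) ↔
      ∃ k : ℤ, alow ≤ (k : ℝ) ∧ (k : ℝ) ≤ ahigh := by
  constructor
  · rintro ⟨x, hx⟩
    obtain ⟨k0, hk0⟩ := hx 0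
    obtain ⟨k1, hk1⟩ := hx 1
    simp only [mpMul] at hk0 hk1
    refine ⟨k1 - k0, ?_, ?_⟩
    · -- alow ≤ k1 - k0
      obtain ⟨j0, _, hj0⟩ := Finset.exists_mem_eq_sup' (Finset.univ_nonempty)
        (fun j => A 0 j + x j)
      have h1 : alow + (A 0 j0 + x j0) ≤ A 1 j0 + x j0 := by
        have := Finset.inf'_le (b := j0) (fun j => A 1 j - A 0 j) (Finset.mem_univ j0)
        rw [hlow]; linarith
      have h2 : A 1 j0 + x j0 ≤ (k1 : ℝ) := by
        rw [← hk1]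
        exact Finset.le_sup' (fun j => A 1 j + x j) (Finset.mem_univ j0)
      have h3 : A 0 j0 + x j0 = (k0 : ℝ) := by rw [← hk0, hj0]
      push_cast
      linarith
    · -- k1 - k0 ≤ ahigh
      obtain ⟨j1, _, hj1⟩ := Finset.exists_mem_eq_sup' (Finset.univ_nonempty)
        (fun j => A 1 j + x j)
      have h1 : A 1 j1 + x j1 ≤ ahigh + (A 0 j1 + x j1) := by
        have := Finset.le_sup' (b := j1) (fun j => A 1 j - A 0 j) (Finset.mem_univ j1)
        rw [hhigh]; linarith
      have h2 : A 0 j1 + x j1 ≤ (k0 : ℝ) := by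
        rw [← hk0]
        exact Finset.le_sup' (fun j => A 0 j + x j) (Finset.mem_univ j1)
      have h3 : A 1 j1 + x j1 = (k1 : ℝ) := by rw [← hk1, hj1]
      push_cast
      linarith
  · rintro ⟨k, hk1, hk2⟩
    refine ⟨fun j => min (-A 0 j) ((k : ℝ) - A 1 j), ?_⟩
    obtain ⟨jlo, _, hjlo⟩ := Finset.exists_mem_eq_inf' (Finset.univ_nonempty)
      (fun j => A 1 j - A 0 j)
    obtain ⟨jhi, _, hjhi⟩ := Finset.exists_mem_eq_sup' (Finset.univ_nonempty)
      (fun j => A 1 j - A 0 j)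
    set x : Fin n → ℝ := fun j => min (-A 0 j) ((k : ℝ) - A 1 j) with hx
    have h0 : mpMul A x 0 = ((0:ℤ):ℝ) := by
      simp only [mpMul, hx]
      refine le_antisymm (Finset.sup'_le _ _ ?_) ?_
      · intro j _
        have := min_le_left (-A 0 j) ((k : ℝ) - A 1 j)
        push_cast
        linarith
      · have hle : A 1 jlo - A 0 jlo ≤ (k : ℝ) := by rw [hlow, hjlo] at hk1; linarith
        have hmin : min (-A 0 jlo) ((k : ℝ) - A 1 jlo) = -A 0 jlo := by
          apply min_eq_left; linarith
        have : A 0 jlo + min (-A 0 jlo) ((k : ℝ) - A 1 jlo) = 0 := by rw [hmin]; ring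
        calc ((0:ℤ):ℝ) = A 0 jlo + min (-A 0 jlo) ((k : ℝ) - A 1 jlo) := by
              rw [this]; norm_num
          _ ≤ _ := Finset.le_sup' (fun x => A 0 x + min (-A 0 x) ((k:ℝ) - A 1 x)) (Finset.mem_univ jlo)
    have h1 : mpMul A x 1 = ((k:ℤ):ℝ) := by
      simp only [mpMul, hx]
      refine le_antisymm (Finset.sup'_le _ _ ?_) ?_
      · intro j _
        have := min_le_right (-A 0 j) ((k : ℝ) - A 1 j)
        linarith
      · have hge : (k : ℝ) ≤ A 1 jhi - A 0 jhi := by rw [hhigh, hjhi] at hk2; linarith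
        have hmin : min (-A 0 jhi) ((k : ℝ) - A 1 jhi) = (k : ℝ) - A 1 jhi := by
          apply min_eq_right; linarith
        calc (k:ℝ) = A 1 jhi + min (-A 0 jhi) ((k : ℝ) - A 1 jhi) := by rw [hmin]; ring
          _ ≤ _ := Finset.le_sup' (fun x => A 1 x + min (-A 0 x) ((k:ℝ) - A 1 x)) (Finset.mem_univ jhi)
    intro i
    fin_cases i
    exacts [⟨0, h0⟩, ⟨k, h1⟩]
end

section
/- Let A be a 2×n real matrix, L = (l₁, l₂) ∈ ℤ², and suppose x ∈ ℝ^n satisfies Ax ∈ ℤ², x ≤ 0, and Ax ≥ L. Then there exists an integer λ ≤ 0 such that x' = λ ⊗ x (i.e., x'_j = λ + x_j) satisfies Ax' ∈ ℤ², x' ≤ 0, Ax' ≥ L, and either (Ax')₁ = l₁ or (Ax')₂ = l₂. -/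
lemma mpMul_shift {m n : ℕ} [NeZero n] (A : Fin m → Fin n → ℝ) (x : Fin n → ℝ)
    (c : ℝ) (i : Fin m) :
    mpMul A (fun j => c + x j) i = c + mpMul A x i := by
  unfold mpMul
  rw [Finset.add_sup' Finset.univ (fun j => A i j + x j) c Finset.univ_nonempty]
  congr 1; ext j; ring

theorem diagonal_projection {n : ℕ} [NeZero n]
    (A : Fin 2 → Fin n → ℝ) (L : Fin 2 → ℤ) (x : Fin n → ℝ)
    (hint : ∀ i, ∃ k : ℤ, mpMul A x i = k)
    (hx0 : ∀ j, x j ≤ 0)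
    (hL : ∀ i, (L i : ℝ) ≤ mpMul A x i) :
    ∃ lam : ℤ, lam ≤ 0 ∧
      (∀ i, ∃ k : ℤ, mpMul A (fun j => (lam : ℝ) + x j) i = k) ∧
      (∀ j, (lam : ℝ) + x j ≤ 0) ∧
      (∀ i, (L i : ℝ) ≤ mpMul A (fun j => (lam : ℝ) + x j) i) ∧
      (mpMul A (fun j => (lam : ℝ) + x j) 0 = L 0 ∨
        mpMul A (fun j => (lam : ℝ) + x j) 1 = L 1) := by
  obtain ⟨k0, hk0⟩ := hint 0
  obtain ⟨k1, hk1⟩ := hint 1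
  set lam : ℤ := max (L 0 - k0) (L 1 - k1) with hlam
  have hL0 : (L 0 : ℝ) ≤ k0 := by rw [← hk0]; exact hL 0
  have hL1 : (L 1 : ℝ) ≤ k1 := by rw [← hk1]; exact hL 1
  have hL0' : L 0 ≤ k0 := by exact_mod_cast hL0
  have hL1' : L 1 ≤ k1 := by exact_mod_cast hL1
  have hlam0 : lam ≤ 0 := by omega
  refine ⟨lam, hlam0, ?_, ?_, ?_, ?_⟩
  · intro i
    rcases Fin.exists_fin_two.mp ⟨i, rfl⟩ with h | h <;> subst h
    · exact ⟨lam + k0, by rw [mpMul_shift, hk0]; push_cast; ring⟩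
    · exact ⟨lam + k1, by rw [mpMul_shift, hk1]; push_cast; ring⟩
  · intro j
    have : (lam : ℝ) ≤ 0 := by exact_mod_cast hlam0
    linarith [hx0 j]
  · intro i
    rcases Fin.exists_fin_two.mp ⟨i, rfl⟩ with h | h <;> subst h
    · rw [mpMul_shift, hk0]
      have : L 0 - k0 ≤ lam := le_max_left _ _
      have : (L 0 : ℝ) - k0 ≤ lam := by exact_mod_cast this
      linarith
    · rw [mpMul_shift, hk1]
      have : L 1 - k1 ≤ lam := le_max_right _ _
      have : (L 1 : ℝ) - k1 ≤ lam := by exact_mod_cast this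
      linarith
  · rcases max_cases (L 0 - k0) (L 1 - k1) with ⟨h, _⟩ | ⟨h, _⟩
    · left
      rw [mpMul_shift, hk0, hlam, h]
      push_cast; ring
    · right
      rw [mpMul_shift, hk1, hlam, h]
      push_cast; ring
end

section
/- Let A be a 3×n real matrix that is column typical (no two entries in any column have equal fractional part) with third row identically zero, and suppose x ∈ ℝ^n satisfies Ax ∈ ℤ³ and (Ax)₃ = 0 with x_k = 0 ≥ x_j for all j, where k attains the max in row 3. Let Ā be the 2×n matrix of the first two rows of A, B^(k) the matrix Ā with column k removed, and z the vector x with component k removed. Then B^(k) z ∈ ℤ², B^(k) z ≥ Ā_k (the k-th column of Ā), and z ≤ 0. -/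
theorem reduction_for_column_typical {n : ℕ} [NeZero n] (hn : 2 ≤ n)
    (A : Fin 3 → Fin n → ℝ)
    (htyp : ∀ j, ∀ i i' : Fin 3, i ≠ i' → Int.fract (A i j) ≠ Int.fract (A i' j))
    (hrow3 : ∀ j, A 2 j = 0)
    (x : Fin n → ℝ)
    (hint : ∀ i, ∃ kk : ℤ, mpMul A x i = kk)
    (hx3 : mpMul A x 2 = 0)
    (k : Fin n) (hk : x k = 0) (hxle : ∀ j, x j ≤ 0)
    (hne : (Finset.univ.erase k).Nonempty) :
    (∀ i : Fin 2, ∃ kk : ℤ,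
        (Finset.univ.erase k).sup' hne (fun j => A i.castSucc j + x j) = kk) ∧
    (∀ i : Fin 2,
        A i.castSucc k ≤ (Finset.univ.erase k).sup' hne (fun j => A i.castSucc j + x j)) ∧
    (∀ j ∈ Finset.univ.erase k, x j ≤ 0) := by
  have hmain : ∀ i : Fin 2,
      (∃ kk : ℤ, (Finset.univ.erase k).sup' hne (fun j => A i.castSucc j + x j) = kk) ∧
      A i.castSucc k ≤ (Finset.univ.erase k).sup' hne (fun j => A i.castSucc j + x j) := by
    intro i
    set f : Fin n → ℝ := fun j => A i.castSucc j + x j with hf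
    set S := (Finset.univ.erase k).sup' hne f with hS
    obtain ⟨m, hm⟩ := hint i.castSucc
    have h1 : mpMul A x i.castSucc = f k ⊔ S := by
      apply le_antisymm
      · apply Finset.sup'_le; intro j _
        rcases eq_or_ne j k with rfl | h
        · exact le_sup_of_le_left le_rfl
        · exact le_sup_of_le_right
            (Finset.le_sup' f (Finset.mem_erase.mpr ⟨h, Finset.mem_univ j⟩))
      · apply sup_le
        · exact Finset.le_sup' f (Finset.mem_univ k)
        · exact Finset.sup'_le _ _ fun j hj => Finset.le_sup' f (Finset.mem_univ j)
    have hfk : f k = A i.castSucc k := by simp [hf, hk]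
    have hAne : Int.fract (A i.castSucc k) ≠ 0 := by
      have h2 : (i.castSucc : Fin 3) ≠ 2 := by
        fin_cases i <;> decide
      intro h0
      have := htyp k i.castSucc 2 h2
      rw [hrow3 k, Int.fract_zero, h0] at this
      exact this rfl
    rcases le_total (f k) S with hle | hle
    · have hSm : S = m := by
        rw [h1, sup_eq_right.mpr hle] at hm; exact hm
      exact ⟨⟨m, hSm⟩, hfk ▸ hle⟩
    · exfalso
      have : f k = m := by rw [h1, sup_eq_left.mpr hle] at hm; exact hm
      apply hAne
      rw [← hfk, this, Int.fract_intCast]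
  refine ⟨fun i => (hmain i).1, fun i => (hmain i).2, fun j _ => hxle j⟩
end
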